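/- Kernel convolution identity in a Hilbert space: Let H be a real Hilbert space, T > 0, k̃ ∈ W^{1,1}(0,T) nonnegative and nonincreasing, and v ∈ L²(0,T;H) (extended by v(t) for the formula below). Then for a.e. t ∈ (0,T): ⟨d/dt (k̃ ∗ v)(t), v(t)⟩ = ½ d/dt (k̃ ∗ ‖v‖²)(t) + ½ k̃(t)‖v(t)‖² + ½ ∫₀ᵗ (-k̃'(s)) ‖v(t) - v(t-s)‖² ds. -/

import Mathlib

open MeasureTheory
open scoped RealInnerProductSpace

section KciAux

open Filter Metric Set intervalIntegral
open scoped Topology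

/-- Lebesgue differentiation: the primitive of an integrable function is a.e. differentiable
with derivative the function itself. -/
lemma kci_ae_hasDerivAt_primitive {E : Type*} [NormedAddCommGroup E] [NormedSpace ℝ E]
    [CompleteSpace E] (f : ℝ → E) (hf : Integrable f) :
    ∀ᵐ t, HasDerivAt (fun τ => ∫ s in (0:ℝ)..τ, f s) (f t) t := by
  filter_upwards [IsUnifLocDoublingMeasure.ae_tendsto_average_norm_sub volume
    hf.locallyIntegrable 1] with t ht
  have key : Tendsto (fun τ : ℝ => ⨍ y in closedBall t |τ - t|, ‖f y - f t‖)
      (𝓝[≠] t) (𝓝 0) := by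
    apply ht (fun _ => t) (fun τ => |τ - t|)
    · have h1 : Tendsto (fun τ : ℝ => |τ - t|) (𝓝[≠] t) (𝓝 0) := by
        have h0 : Tendsto (fun τ : ℝ => |τ - t|) (𝓝 t) (𝓝 |t - t|) :=
          ((continuous_id.sub continuous_const).abs).tendsto t
        simpa using h0.mono_left nhdsWithin_le_nhds
      rw [tendsto_nhdsWithin_iff]
      refine ⟨h1, ?_⟩
      filter_upwards [self_mem_nhdsWithin] with τ (hτ : τ ≠ t)
      exact abs_pos.2 (sub_ne_zero.2 hτ)
    · filter_upwards with τ
      simp [abs_nonneg]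
  rw [hasDerivAt_iff_tendsto]
  have hbound : ∀ τ : ℝ, τ ≠ t →
      ‖τ - t‖⁻¹ * ‖(∫ s in (0:ℝ)..τ, f s) - (∫ s in (0:ℝ)..t, f s) - (τ - t) • f t‖
        ≤ 2 * ⨍ y in closedBall t |τ - t|, ‖f y - f t‖ := by
    intro τ hτ
    have hint : IntervalIntegrable f volume t τ := hf.intervalIntegrable
    have e1 : (∫ s in (0:ℝ)..τ, f s) - (∫ s in (0:ℝ)..t, f s) = ∫ s in t..τ, f s :=
      integral_interval_sub_left hf.intervalIntegrable hf.intervalIntegrable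
    have e2 : (τ - t) • f t = ∫ _ in t..τ, f t := by
      rw [intervalIntegral.integral_const]
    have e3 : (∫ s in (0:ℝ)..τ, f s) - (∫ s in (0:ℝ)..t, f s) - (τ - t) • f t
        = ∫ s in t..τ, (f s - f t) := by
      rw [e1, e2, integral_sub hint intervalIntegrable_const]
    rw [e3]
    have hsub : Set.uIoc t τ ⊆ closedBall t |τ - t| := by
      intro x hx
      rcases le_total t τ with h | h
      · rw [uIoc_of_le h] at hx
        rw [mem_closedBall, Real.dist_eq, abs_sub_le_iff]
        constructor
        · linarith [hx.1, hx.2, le_abs_self (τ - t)]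
        · linarith [hx.1, hx.2, le_abs_self (τ - t)]
      · rw [uIoc_of_ge h] at hx
        rw [mem_closedBall, Real.dist_eq, abs_sub_le_iff]
        constructor
        · linarith [hx.1, hx.2, neg_le_abs (τ - t), neg_sub t τ]
        · linarith [hx.1, hx.2, neg_le_abs (τ - t)]
    have hnormint : IntegrableOn (fun y => ‖f y - f t‖) (closedBall t |τ - t|) :=
      (hf.integrableOn.sub
        (integrableOn_const measure_closedBall_lt_top.ne)).norm
    have b1 : ‖∫ s in t..τ, (f s - f t)‖ ≤ ∫ y in closedBall t |τ - t|, ‖f y - f t‖ := by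
      refine le_trans (intervalIntegral.norm_integral_le_integral_norm_uIoc) ?_
      exact setIntegral_mono_set hnormint
        (Eventually.of_forall fun y => norm_nonneg _) (HasSubset.Subset.eventuallyLE hsub)
    have hvol : (volume (closedBall t |τ - t|)).toReal = 2 * |τ - t| := by
      rw [Real.volume_closedBall, ENNReal.toReal_ofReal (by positivity)]
    have havg : (⨍ y in closedBall t |τ - t|, ‖f y - f t‖)
        = (2 * |τ - t|)⁻¹ * ∫ y in closedBall t |τ - t|, ‖f y - f t‖ := by
      rw [setAverage_eq, measureReal_def, hvol]; simp [smul_eq_mul]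
    have habs : |τ - t| > 0 := abs_pos.2 (sub_ne_zero.2 hτ)
    rw [havg, Real.norm_eq_abs]
    have e4 : 2 * ((2 * |τ - t|)⁻¹ * ∫ y in closedBall t |τ - t|, ‖f y - f t‖)
        = |τ - t|⁻¹ * ∫ y in closedBall t |τ - t|, ‖f y - f t‖ := by
      field_simp
    rw [e4]
    exact mul_le_mul_of_nonneg_left b1 (inv_nonneg.2 (abs_nonneg _))
  rw [← nhdsNE_sup_pure t]
  refine Tendsto.sup ?_ ?_
  · refine squeeze_zero' (Eventually.of_forall fun τ => by positivity)
      ?_ (by simpa using key.const_mul (2:ℝ))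
    filter_upwards [self_mem_nhdsWithin] with τ (hτ : τ ≠ t)
    exact hbound τ hτ
  · rw [Filter.tendsto_pure_left]
    intro s hs
    have h0 : ‖t - t‖⁻¹ *
        ‖(∫ s in (0:ℝ)..t, f s) - (∫ s in (0:ℝ)..t, f s) - (t - t) • f t‖ = 0 := by
      simp
    simpa [h0] using mem_of_mem_nhds hs

/-- The shear `(r, s) ↦ (r, r + s)` as a measurable equivalence of `ℝ × ℝ`. -/
def kciShear : (ℝ × ℝ) ≃ᵐ (ℝ × ℝ) where
  toFun p := (p.1, p.1 + p.2)
  invFun p := (p.1, p.2 - p.1)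
  left_inv p := by simp
  right_inv p := by simp
  measurable_toFun := measurable_fst.prodMk (measurable_fst.add measurable_snd)
  measurable_invFun := measurable_fst.prodMk (measurable_snd.sub measurable_fst)

lemma kciShear_mp : MeasurePreserving (kciShear : ℝ × ℝ → ℝ × ℝ)
    (volume.prod volume) (volume.prod volume) :=
  measurePreserving_prod_add volume volume

variable {E : Type*} [NormedAddCommGroup E] [NormedSpace ℝ E] [CompleteSpace E]

/-- Fubini package for the triangular regions used in the convolution decomposition. -/
lemma kci_fubini (g : ℝ → ℝ) (hg : Integrable g) (w : ℝ → E) (hw : Integrable w) (τ : ℝ) :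
    Integrable ((Set.Ioo (0:ℝ) τ).indicator
      (fun s => (∫ r in Set.Ioo (0:ℝ) (τ - s), g r) • w s)) ∧
    Integrable ((Set.Ioo (0:ℝ) τ).indicator
      (fun u => ∫ r in Set.Ioo (0:ℝ) u, g r • w (u - r))) ∧
    (∫ s in Set.Ioo (0:ℝ) τ, (∫ r in Set.Ioo (0:ℝ) (τ - s), g r) • w s
      = ∫ u in Set.Ioo (0:ℝ) τ, ∫ r in Set.Ioo (0:ℝ) u, g r • w (u - r)) ∧
    (∀ᵐ u, u ∈ Set.Ioo (0:ℝ) τ →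
      IntegrableOn (fun r => g r • w (u - r)) (Set.Ioo (0:ℝ) u)) := by
  classical
  set Φ : ℝ × ℝ → E := fun q => g q.1 • w q.2 with hΦdef
  set G : ℝ × ℝ → E := fun p => g p.1 • w (p.2 - p.1) with hGdef
  set B : Set (ℝ × ℝ) := {q | 0 < q.1 ∧ 0 < q.2 ∧ q.1 + q.2 < τ} with hBdef
  set A : Set (ℝ × ℝ) := {p | 0 < p.1 ∧ p.1 < p.2 ∧ p.2 < τ} with hAdef
  have hBm : MeasurableSet B := by
    have : B = {q : ℝ × ℝ | 0 < q.1} ∩ ({q | 0 < q.2} ∩ {q | q.1 + q.2 < τ}) := by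
      ext q; simp [hBdef, Set.mem_setOf_eq, and_assoc]
    rw [this]
    exact (measurableSet_lt measurable_const measurable_fst).inter
      ((measurableSet_lt measurable_const measurable_snd).inter
        (measurableSet_lt (measurable_fst.add measurable_snd) measurable_const))
  have hAm : MeasurableSet A := by
    have : A = {p : ℝ × ℝ | 0 < p.1} ∩ ({p | p.1 < p.2} ∩ {p | p.2 < τ}) := by
      ext p; simp [hAdef, Set.mem_setOf_eq, and_assoc]
    rw [this]
    exact (measurableSet_lt measurable_const measurable_fst).inter
      ((measurableSet_lt measurable_fst measurable_snd).inter
        (measurableSet_lt measurable_snd measurable_const))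
  have hBint : Integrable (B.indicator Φ) (volume.prod volume) :=
    (hg.smul_prod hw).indicator hBm
  have hmem : ∀ q : ℝ × ℝ, kciShear q ∈ A ↔ q ∈ B := by
    intro q
    show (0 < q.1 ∧ q.1 < q.1 + q.2 ∧ q.1 + q.2 < τ) ↔ (0 < q.1 ∧ 0 < q.2 ∧ q.1 + q.2 < τ)
    constructor <;> rintro ⟨h1, h2, h3⟩ <;> exact ⟨h1, by linarith, h3⟩
  have hcomp : (A.indicator G) ∘ (kciShear : ℝ × ℝ → ℝ × ℝ) = B.indicator Φ := by
    funext q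
    by_cases hq : q ∈ B
    · rw [Function.comp_apply, Set.indicator_of_mem ((hmem q).2 hq),
        Set.indicator_of_mem hq]
      show g q.1 • w (q.1 + q.2 - q.1) = g q.1 • w q.2
      rw [add_sub_cancel_left]
    · rw [Function.comp_apply, Set.indicator_of_notMem (fun h => hq ((hmem q).1 h)),
        Set.indicator_of_notMem hq]
  have hAint : Integrable (A.indicator G) (volume.prod volume) := by
    rw [← kciShear_mp.integrable_comp_emb kciShear.measurableEmbedding, hcomp]
    exact hBint
  have hint_eq : ∫ p, A.indicator G p ∂(volume.prod volume)
      = ∫ q, B.indicator Φ q ∂(volume.prod volume) := by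
    rw [← kciShear_mp.integral_comp kciShear.measurableEmbedding (A.indicator G)]
    exact congrArg (fun f => ∫ q, f q ∂(volume.prod volume)) hcomp
  -- slices of B
  have hsliceBfun : ∀ s ∈ Set.Ioo (0:ℝ) τ, (fun r => B.indicator Φ (r, s))
      = (Set.Ioo (0:ℝ) (τ - s)).indicator (fun r => g r • w s) := by
    intro s hs
    funext r
    by_cases hr : r ∈ Set.Ioo (0:ℝ) (τ - s)
    · rw [Set.indicator_of_mem hr,
        Set.indicator_of_mem (show (r, s) ∈ B from ⟨hr.1, hs.1, by
          have := hr.2; simp only [Set.mem_Ioo] at hr; linarith⟩)]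
    · rw [Set.indicator_of_notMem hr, Set.indicator_of_notMem]
      intro hmem'
      apply hr
      have h1 : 0 < r := hmem'.1
      have h3 : r + s < τ := hmem'.2.2
      exact Set.mem_Ioo.2 ⟨h1, by linarith⟩
  have hsliceB : ∀ s : ℝ, (∫ r, B.indicator Φ (r, s))
      = (Set.Ioo (0:ℝ) τ).indicator
        (fun s => (∫ r in Set.Ioo (0:ℝ) (τ - s), g r) • w s) s := by
    intro s
    by_cases hs : s ∈ Set.Ioo (0:ℝ) τ
    · rw [hsliceBfun s hs, MeasureTheory.integral_indicator measurableSet_Ioo,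
        Set.indicator_of_mem hs, _root_.integral_smul_const]
    · rw [Set.indicator_of_notMem hs]
      have : (fun r => B.indicator Φ (r, s)) = fun _ => 0 := by
        funext r
        apply Set.indicator_of_notMem
        intro hmem'
        apply hs
        have h1 : 0 < r := hmem'.1
        have h2 : 0 < s := hmem'.2.1
        have h3 : r + s < τ := hmem'.2.2
        exact Set.mem_Ioo.2 ⟨h2, by linarith⟩
      rw [this, integral_zero]
  -- slices of A
  have hsliceAfun : ∀ u ∈ Set.Ioo (0:ℝ) τ, (fun r => A.indicator G (r, u))
      = (Set.Ioo (0:ℝ) u).indicator (fun r => g r • w (u - r)) := by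
    intro u hu
    funext r
    by_cases hr : r ∈ Set.Ioo (0:ℝ) u
    · rw [Set.indicator_of_mem hr, Set.indicator_of_mem
        (show (r, u) ∈ A from ⟨hr.1, hr.2, hu.2⟩)]
    · rw [Set.indicator_of_notMem hr, Set.indicator_of_notMem]
      intro hmem'
      exact hr ⟨hmem'.1, hmem'.2.1⟩
  have hsliceA : ∀ u : ℝ, (∫ r, A.indicator G (r, u))
      = (Set.Ioo (0:ℝ) τ).indicator
        (fun u => ∫ r in Set.Ioo (0:ℝ) u, g r • w (u - r)) u := by
    intro u
    by_cases hu : u ∈ Set.Ioo (0:ℝ) τ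
    · rw [hsliceAfun u hu, MeasureTheory.integral_indicator measurableSet_Ioo,
        Set.indicator_of_mem hu]
    · rw [Set.indicator_of_notMem hu]
      have : (fun r => A.indicator G (r, u)) = fun _ => 0 := by
        funext r
        apply Set.indicator_of_notMem
        intro hmem'
        simp only [Set.mem_Ioo, not_and, not_lt] at hu
        rcases lt_or_ge 0 u with h0u | h0u
        · exact absurd hmem'.2.2 (not_lt.2 (hu h0u))
        · exact absurd (lt_trans hmem'.1 hmem'.2.1) (not_lt.2 h0u)
      rw [this, integral_zero]
  have Int1 : Integrable ((Set.Ioo (0:ℝ) τ).indicator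
      (fun s => (∫ r in Set.Ioo (0:ℝ) (τ - s), g r) • w s)) := by
    have := hBint.integral_prod_right
    rwa [show (fun s => ∫ r, B.indicator Φ (r, s)) = _ from funext hsliceB] at this
  have Int2 : Integrable ((Set.Ioo (0:ℝ) τ).indicator
      (fun u => ∫ r in Set.Ioo (0:ℝ) u, g r • w (u - r))) := by
    have := hAint.integral_prod_right
    rwa [show (fun u => ∫ r, A.indicator G (r, u)) = _ from funext hsliceA] at this
  refine ⟨Int1, Int2, ?_, ?_⟩
  · have eB : ∫ q, B.indicator Φ q ∂(volume.prod volume)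
        = ∫ s in Set.Ioo (0:ℝ) τ, (∫ r in Set.Ioo (0:ℝ) (τ - s), g r) • w s := by
      rw [integral_prod_symm _ hBint]
      rw [show (fun s => ∫ r, B.indicator Φ (r, s)) = _ from funext hsliceB]
      exact MeasureTheory.integral_indicator measurableSet_Ioo
    have eA : ∫ p, A.indicator G p ∂(volume.prod volume)
        = ∫ u in Set.Ioo (0:ℝ) τ, ∫ r in Set.Ioo (0:ℝ) u, g r • w (u - r) := by
      rw [integral_prod_symm _ hAint]
      rw [show (fun u => ∫ r, A.indicator G (r, u)) = _ from funext hsliceA]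
      exact MeasureTheory.integral_indicator measurableSet_Ioo
    rw [← eB, ← eA, hint_eq]
  · filter_upwards [hAint.prod_left_ae] with u hu huτ
    rw [hsliceAfun u huτ] at hu
    rwa [← integrable_indicator_iff measurableSet_Ioo]


/-- Master lemma: a.e. differentiability of the convolution with the decomposition value. -/
lemma kci_master (T k₀ : ℝ) (hT : 0 < T) (k g : ℝ → ℝ) (hg : Integrable g)
    (hrep : ∀ x ∈ Set.Ioo (0:ℝ) T, k x = k₀ + ∫ r in Set.Ioo (0:ℝ) x, g r)
    (w : ℝ → E) (hw : Integrable w) :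
    ∀ᵐ t, t ∈ Set.Ioo (0:ℝ) T →
      (HasDerivAt (fun τ => ∫ s in (0:ℝ)..τ, k (τ - s) • w s)
        (k₀ • w t + ∫ r in Set.Ioo (0:ℝ) t, g r • w (t - r)) t ∧
       IntegrableOn (fun r => g r • w (t - r)) (Set.Ioo (0:ℝ) t)) := by
  classical
  obtain ⟨_, IntT2, _, hslice⟩ := kci_fubini g hg w hw T
  set h : ℝ → E := (Set.Ioo (0:ℝ) T).indicator
    (fun u => ∫ r in Set.Ioo (0:ℝ) u, g r • w (u - r)) with hh
  have hdecomp : ∀ τ ∈ Set.Ioo (0:ℝ) T,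
      (∫ s in (0:ℝ)..τ, k (τ - s) • w s)
        = k₀ • (∫ s in (0:ℝ)..τ, w s) + ∫ u in (0:ℝ)..τ, h u := by
    intro τ hτ
    obtain ⟨Int1, _, hEq, _⟩ := kci_fubini g hg w hw τ
    have hτ0 : (0:ℝ) ≤ τ := hτ.1.le
    rw [intervalIntegral.integral_of_le hτ0, intervalIntegral.integral_of_le hτ0,
        intervalIntegral.integral_of_le hτ0, integral_Ioc_eq_integral_Ioo,
        integral_Ioc_eq_integral_Ioo, integral_Ioc_eq_integral_Ioo]
    have Int1' : IntegrableOn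
        (fun s => (∫ r in Set.Ioo (0:ℝ) (τ - s), g r) • w s) (Set.Ioo (0:ℝ) τ) :=
      (integrable_indicator_iff measurableSet_Ioo).1 Int1
    have step1 : ∫ s in Set.Ioo (0:ℝ) τ, k (τ - s) • w s
        = ∫ s in Set.Ioo (0:ℝ) τ,
            (k₀ • w s + (∫ r in Set.Ioo (0:ℝ) (τ - s), g r) • w s) := by
      apply setIntegral_congr_fun measurableSet_Ioo
      intro s hs
      dsimp only
      have hs' : 0 < s ∧ s < τ := hs
      have hτs : τ - s ∈ Set.Ioo (0:ℝ) T :=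
        ⟨by linarith [hs'.2], by linarith [hs'.1, hτ.2]⟩
      rw [hrep _ hτs, add_smul]
    have step2 : ∫ s in Set.Ioo (0:ℝ) τ,
          (k₀ • w s + (∫ r in Set.Ioo (0:ℝ) (τ - s), g r) • w s)
        = k₀ • (∫ s in Set.Ioo (0:ℝ) τ, w s)
            + ∫ s in Set.Ioo (0:ℝ) τ, (∫ r in Set.Ioo (0:ℝ) (τ - s), g r) • w s := by
      have ha : IntegrableOn (fun s => k₀ • w s) (Set.Ioo (0:ℝ) τ) :=
        hw.integrableOn.smul k₀
      rw [integral_add ha Int1', MeasureTheory.integral_smul]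
    have step3 : ∫ u in Set.Ioo (0:ℝ) τ, (∫ r in Set.Ioo (0:ℝ) u, g r • w (u - r))
        = ∫ u in Set.Ioo (0:ℝ) τ, h u := by
      apply setIntegral_congr_fun measurableSet_Ioo
      intro u hu
      dsimp only
      rw [hh, Set.indicator_of_mem
        (show u ∈ Set.Ioo (0:ℝ) T from ⟨hu.1, lt_trans hu.2 hτ.2⟩)]
    rw [step1, step2, hEq, step3]
  filter_upwards [kci_ae_hasDerivAt_primitive w hw,
    kci_ae_hasDerivAt_primitive h IntT2, hslice] with t h1 h2 h3 ht
  refine ⟨?_, h3 ht⟩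
  have hd : HasDerivAt (fun τ => k₀ • (∫ s in (0:ℝ)..τ, w s) + ∫ u in (0:ℝ)..τ, h u)
      (k₀ • w t + h t) t := (HasDerivAt.const_smul k₀ h1).add h2
  have hev : (fun τ => ∫ s in (0:ℝ)..τ, k (τ - s) • w s)
      =ᶠ[nhds t] (fun τ => k₀ • (∫ s in (0:ℝ)..τ, w s) + ∫ u in (0:ℝ)..τ, h u) := by
    filter_upwards [isOpen_Ioo.mem_nhds ht] with τ hτ using hdecomp τ hτ
  have hres := hd.congr_of_eventuallyEq hev
  have hval : h t = ∫ r in Set.Ioo (0:ℝ) t, g r • w (t - r) :=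
    Set.indicator_of_mem ht _
  rwa [hval] at hres

/-- FTC representation of the kernel via its derivative. -/
lemma kci_rep (T : ℝ) (hT : 0 < T) (k k' : ℝ → ℝ)
    (hderiv : ∀ s ∈ Set.Ioo (0:ℝ) T, HasDerivAt k (k' s) s)
    (hk'_int : IntegrableOn k' (Set.Ioo 0 T)) :
    ∀ x ∈ Set.Ioo (0:ℝ) T,
      k x = (k (T/2) - ∫ r in Set.Ioo (0:ℝ) (T/2), k' r)
              + ∫ r in Set.Ioo (0:ℝ) x, k' r := by
  intro x hx
  have hTT : T/2 ∈ Set.Ioo (0:ℝ) T := ⟨by linarith, by linarith⟩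
  have hII : ∀ y ∈ Set.Ioo (0:ℝ) T, IntervalIntegrable k' volume 0 y := by
    intro y hy
    rw [intervalIntegrable_iff]
    apply hk'_int.mono_set
    rw [Set.uIoc_of_le hy.1.le]
    intro r hr
    exact ⟨hr.1, lt_of_le_of_lt hr.2 hy.2⟩
  have hsub : Set.uIcc (T/2) x ⊆ Set.Ioo (0:ℝ) T :=
    (Set.ordConnected_Ioo).uIcc_subset hTT hx
  have hIcx : IntervalIntegrable k' volume (T/2) x := by
    rw [intervalIntegrable_iff]
    apply hk'_int.mono_set
    exact fun r hr => hsub (Set.Ioc_subset_Icc_self hr)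
  have hftc : ∫ r in (T/2)..x, k' r = k x - k (T/2) :=
    intervalIntegral.integral_eq_sub_of_hasDerivAt
      (fun y hy => hderiv y (hsub hy)) hIcx
  have hdiff : (∫ r in (0:ℝ)..x, k' r) - ∫ r in (0:ℝ)..(T/2), k' r
      = ∫ r in (T/2)..x, k' r :=
    intervalIntegral.integral_interval_sub_left (hII x hx) (hII _ hTT)
  have cv : ∀ y, (0:ℝ) ≤ y →
      ∫ r in Set.Ioo (0:ℝ) y, k' r = ∫ r in (0:ℝ)..y, k' r := by
    intro y hy
    rw [intervalIntegral.integral_of_le hy, integral_Ioc_eq_integral_Ioo]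
  rw [cv x hx.1.le, cv _ hTT.1.le]
  linarith [hftc, hdiff]

end KciAux

/-- Kernel convolution identity in a Hilbert space (Gripenberg et al.):
for a nonnegative nonincreasing W^{1,1} kernel k̃ and v ∈ L²(0,T;H), a.e. t:
⟨(k̃∗v)'(t), v(t)⟩ = ½ (k̃∗‖v‖²)'(t) + ½ k̃(t)‖v(t)‖²
  + ½ ∫₀ᵗ (-k̃'(s)) ‖v(t)-v(t-s)‖² ds. -/
theorem kernel_convolution_identity
    {H : Type*} [NormedAddCommGroup H] [InnerProductSpace ℝ H] [CompleteSpace H]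
    (T : ℝ) (hT : 0 < T) (ktil ktil' : ℝ → ℝ)
    (hderiv : ∀ s ∈ Set.Ioo (0:ℝ) T, HasDerivAt ktil (ktil' s) s)
    (hk_int : IntegrableOn ktil (Set.Ioo 0 T))
    (hk'_int : IntegrableOn ktil' (Set.Ioo 0 T))
    (hk_nonneg : ∀ s ∈ Set.Ioo (0:ℝ) T, 0 ≤ ktil s)
    (hk_antitone : AntitoneOn ktil (Set.Ioo 0 T))
    (v : ℝ → H) (hv : MemLp v 2 (volume.restrict (Set.Ioo 0 T))) :
    ∀ᵐ t ∂(volume.restrict (Set.Ioo (0:ℝ) T)),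
      ∃ (D : H) (d : ℝ),
        HasDerivAt (fun τ : ℝ => ∫ s in (0:ℝ)..τ, ktil (τ - s) • v s) D t ∧
        HasDerivAt (fun τ : ℝ => ∫ s in (0:ℝ)..τ, ktil (τ - s) * ‖v s‖ ^ 2) d t ∧
        ⟪D, v t⟫ =
          (1 / 2) * d + (1 / 2) * ktil t * ‖v t‖ ^ 2 +
            (1 / 2) * ∫ s in (0:ℝ)..t, (-(ktil' s)) * ‖v t - v (t - s)‖ ^ 2 := by
  classical
  haveI hfin : IsFiniteMeasure (volume.restrict (Set.Ioo (0:ℝ) T)) := ⟨by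
    rw [Measure.restrict_apply_univ, Real.volume_Ioo]
    exact ENNReal.ofReal_lt_top⟩
  have hv1 : IntegrableOn v (Set.Ioo 0 T) := hv.integrable one_le_two
  have hv2 : IntegrableOn (fun s => ‖v s‖ ^ 2) (Set.Ioo 0 T) := by
    have h2 : Integrable (fun s => ‖v s‖ ^ (ENNReal.toReal 2))
        (volume.restrict (Set.Ioo 0 T)) :=
      memLp_one_iff_integrable.1 (hv.norm_rpow (by norm_num) (by norm_num))
    have h3 : (fun s : ℝ => ‖v s‖ ^ (2:ℕ)) = fun s => ‖v s‖ ^ (ENNReal.toReal 2) := by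
      funext s
      rw [ENNReal.toReal_ofNat, ← Real.rpow_natCast]
      norm_num
    exact h3 ▸ h2
  set g : ℝ → ℝ := (Set.Ioo (0:ℝ) T).indicator ktil' with hg_def
  set w1 : ℝ → H := (Set.Ioo (0:ℝ) T).indicator v with hw1_def
  set w2 : ℝ → ℝ := (Set.Ioo (0:ℝ) T).indicator (fun s => ‖v s‖ ^ 2) with hw2_def
  have hg : Integrable g := (integrable_indicator_iff measurableSet_Ioo).2 hk'_int
  have hw1 : Integrable w1 := (integrable_indicator_iff measurableSet_Ioo).2 hv1
  have hw2 : Integrable w2 := (integrable_indicator_iff measurableSet_Ioo).2 hv2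
  set k₀ : ℝ := ktil (T/2) - ∫ r in Set.Ioo (0:ℝ) (T/2), ktil' r with hk0_def
  have hrep : ∀ x ∈ Set.Ioo (0:ℝ) T, ktil x = k₀ + ∫ r in Set.Ioo (0:ℝ) x, g r := by
    intro x hx
    have hgx : ∫ r in Set.Ioo (0:ℝ) x, g r = ∫ r in Set.Ioo (0:ℝ) x, ktil' r := by
      apply setIntegral_congr_fun measurableSet_Ioo
      intro r hr
      have hmem : r ∈ Set.Ioo (0:ℝ) T := ⟨hr.1, lt_trans hr.2 hx.2⟩
      exact Set.indicator_of_mem hmem _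
    rw [hgx]
    exact kci_rep T hT ktil ktil' hderiv hk'_int x hx
  have M1 := kci_master T k₀ hT ktil g hg hrep w1 hw1
  have M2 := kci_master T k₀ hT ktil g hg hrep w2 hw2
  rw [MeasureTheory.ae_restrict_iff' measurableSet_Ioo]
  filter_upwards [M1, M2] with t Hm1 Hm2 ht
  obtain ⟨hd1, hI1⟩ := Hm1 ht
  obtain ⟨hd2, hI2⟩ := Hm2 ht
  have hev1 : (fun τ : ℝ => ∫ s in (0:ℝ)..τ, ktil (τ - s) • v s)
      =ᶠ[nhds t] (fun τ => ∫ s in (0:ℝ)..τ, ktil (τ - s) • w1 s) := by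
    filter_upwards [isOpen_Ioo.mem_nhds ht] with τ hτ
    rw [intervalIntegral.integral_of_le hτ.1.le, intervalIntegral.integral_of_le hτ.1.le]
    apply setIntegral_congr_fun measurableSet_Ioc
    intro s hs
    dsimp only
    have hmem : s ∈ Set.Ioo (0:ℝ) T := ⟨hs.1, lt_of_le_of_lt hs.2 hτ.2⟩
    rw [hw1_def, Set.indicator_of_mem hmem]
  have hev2 : (fun τ : ℝ => ∫ s in (0:ℝ)..τ, ktil (τ - s) * ‖v s‖ ^ 2)
      =ᶠ[nhds t] (fun τ => ∫ s in (0:ℝ)..τ, ktil (τ - s) • w2 s) := by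
    filter_upwards [isOpen_Ioo.mem_nhds ht] with τ hτ
    rw [intervalIntegral.integral_of_le hτ.1.le, intervalIntegral.integral_of_le hτ.1.le]
    apply setIntegral_congr_fun measurableSet_Ioc
    intro s hs
    dsimp only
    have hmem : s ∈ Set.Ioo (0:ℝ) T := ⟨hs.1, lt_of_le_of_lt hs.2 hτ.2⟩
    rw [hw2_def, Set.indicator_of_mem hmem, smul_eq_mul]
  refine ⟨_, _, hd1.congr_of_eventuallyEq hev1, hd2.congr_of_eventuallyEq hev2, ?_⟩
  -- the pointwise identity
  have hw1t : w1 t = v t := Set.indicator_of_mem ht _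
  have hw2t : w2 t = ‖v t‖ ^ 2 := Set.indicator_of_mem ht _
  have hF1 : ⟪k₀ • w1 t + ∫ r in Set.Ioo (0:ℝ) t, g r • w1 (t - r), v t⟫
      = k₀ * ‖v t‖ ^ 2 + ∫ r in Set.Ioo (0:ℝ) t, g r * ⟪v t, w1 (t - r)⟫ := by
    rw [inner_add_left, real_inner_smul_left, hw1t, real_inner_self_eq_norm_sq]
    congr 1
    rw [real_inner_comm, ← integral_inner hI1 (v t)]
    apply setIntegral_congr_fun measurableSet_Ioo
    intro r hr
    exact real_inner_smul_right _ _ _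
  have hF3 : (k₀ • w2 t + ∫ r in Set.Ioo (0:ℝ) t, g r • w2 (t - r))
      = k₀ * ‖v t‖ ^ 2 + ∫ r in Set.Ioo (0:ℝ) t, g r * w2 (t - r) := by
    simp only [smul_eq_mul, hw2t]
  have hF4 : ktil t = k₀ + ∫ r in Set.Ioo (0:ℝ) t, g r := hrep t ht
  have hi1 : IntegrableOn (fun s => g s * ‖v t‖ ^ 2) (Set.Ioo (0:ℝ) t) :=
    hg.integrableOn.mul_const _
  have hi2 : IntegrableOn (fun s => g s * ⟪v t, w1 (t - s)⟫) (Set.Ioo (0:ℝ) t) := by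
    have h := Integrable.const_inner (𝕜 := ℝ) (v t) hI1
    have he : (fun s => ⟪v t, g s • w1 (t - s)⟫) = fun s => g s * ⟪v t, w1 (t - s)⟫ := by
      funext s
      exact real_inner_smul_right _ _ _
    rwa [he] at h
  have hi3 : IntegrableOn (fun s => g s * w2 (t - s)) (Set.Ioo (0:ℝ) t) := by
    have he : (fun s => g s • w2 (t - s)) = fun s => g s * w2 (t - s) := by
      funext s
      exact smul_eq_mul ..
    rwa [he] at hI2
  have hF5 : ∫ s in (0:ℝ)..t, (-(ktil' s)) * ‖v t - v (t - s)‖ ^ 2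
      = -((∫ r in Set.Ioo (0:ℝ) t, g r) * ‖v t‖ ^ 2)
          + 2 * (∫ r in Set.Ioo (0:ℝ) t, g r * ⟪v t, w1 (t - r)⟫)
          - ∫ r in Set.Ioo (0:ℝ) t, g r * w2 (t - r) := by
    rw [intervalIntegral.integral_of_le ht.1.le, integral_Ioc_eq_integral_Ioo]
    have hcongr : ∫ s in Set.Ioo (0:ℝ) t, (-(ktil' s)) * ‖v t - v (t - s)‖ ^ 2
        = ∫ s in Set.Ioo (0:ℝ) t,
            (-(g s * ‖v t‖ ^ 2) + 2 * (g s * ⟪v t, w1 (t - s)⟫) - g s * w2 (t - s)) := by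
      apply setIntegral_congr_fun measurableSet_Ioo
      intro s hs
      dsimp only
      have hsT : s ∈ Set.Ioo (0:ℝ) T := ⟨hs.1, lt_trans hs.2 ht.2⟩
      have htsT : t - s ∈ Set.Ioo (0:ℝ) T :=
        ⟨by linarith [hs.2], by linarith [hs.1, ht.2]⟩
      have e1 : g s = ktil' s := by rw [hg_def]; exact Set.indicator_of_mem hsT _
      have e2 : w1 (t - s) = v (t - s) := by
        rw [hw1_def]; exact Set.indicator_of_mem htsT _
      have e3 : w2 (t - s) = ‖v (t - s)‖ ^ 2 := by
        rw [hw2_def]; exact Set.indicator_of_mem htsT _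
      rw [e1, e2, e3, norm_sub_sq_real]
      ring
    have hiN : IntegrableOn (fun s => -(g s * ‖v t‖ ^ 2)) (Set.Ioo (0:ℝ) t) := hi1.neg
    have hi2' : IntegrableOn (fun s => 2 * (g s * ⟪v t, w1 (t - s)⟫))
        (Set.Ioo (0:ℝ) t) := hi2.const_mul 2
    have hiA : IntegrableOn
        (fun s => -(g s * ‖v t‖ ^ 2) + 2 * (g s * ⟪v t, w1 (t - s)⟫))
        (Set.Ioo (0:ℝ) t) := hiN.add hi2'
    rw [hcongr, integral_sub hiA hi3, integral_add hiN hi2', integral_neg,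
        MeasureTheory.integral_mul_const, MeasureTheory.integral_const_mul]
  rw [hF1, hF3, hF4, hF5]
  ring
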